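/- Let g : [0, n+1/2] → ℝ be a continuous piecewise-linear function encoded by a slope sequence satisfying (C1) σ_{1,1} = 1 and (C2) σ_{j,2} = 1 ⟹ σ_{j+1,1} = 1, with g(0) = −1/2. Assume M := max g > g(n + 1/2), and let k satisfy k − 1/2 = max g⁻¹(M). Then k ≤ n, σ_{k+1} ∈ {(−1,−1), −1}, g(k + 1/2) = M − 1, and g(x) ≤ M − 1 for all k + 1/2 ≤ x ≤ n + 1/2. -/
import Mathlib


/-- The slope data: `σ_j = (σ_{j,1}, σ_{j,2})` for `1 ≤ j ≤ n` (0-indexed here) and the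
final single slope `σ_{n+1} = σlast`. -/
def sigFull (n : ℕ) (σ : Fin n → ℤ × ℤ) (σlast : ℤ) (j : ℕ) : ℤ × ℤ :=
  if h : j < n then σ ⟨j, h⟩ else (σlast, σlast)

/-- The slope of `g` on the half-integer interval `(t/2, (t+1)/2)`:
`σ_{j,1}` on `(j-1, j-1/2)` and `σ_{j,2}` on `(j-1/2, j)`, and `σ_{n+1}` on `(n, n+1/2)`. -/
def plSlope (n : ℕ) (σ : Fin n → ℤ × ℤ) (σlast : ℤ) (t : ℕ) : ℤ :=
  if t % 2 = 0 then (sigFull n σ σlast (t / 2)).1 else (sigFull n σ σlast (t / 2)).2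

/-- The values of `g` at the half-integer grid points `t/2`, with `g(0) = -1/2`. -/
noncomputable def plVal (n : ℕ) (σ : Fin n → ℤ × ℤ) (σlast : ℤ) : ℕ → ℝ
  | 0 => -1/2
  | t + 1 => plVal n σ σlast t + (plSlope n σ σlast t : ℝ) / 2

/-- The continuous piecewise-linear function `g : [0, n+1/2] → ℝ` with `g(0) = -1/2`
encoded by the slope sequence `(σ_1, …, σ_n, σ_{n+1})`. -/
noncomputable def plFun (n : ℕ) (σ : Fin n → ℤ × ℤ) (σlast : ℤ) (x : ℝ) : ℝ :=
  let t : ℕ := (⌊2 * x⌋).toNat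
  plVal n σ σlast t + (x - t / 2) * (plSlope n σ σlast t : ℝ)

lemma plFun_grid (n : ℕ) (σ : Fin n → ℤ × ℤ) (σlast : ℤ) (t : ℕ) :
    plFun n σ σlast ((t : ℝ)/2) = plVal n σ σlast t := by
  unfold plFun
  have h1 : (2:ℝ) * ((t:ℝ)/2) = ((t:ℤ):ℝ) := by push_cast; ring
  rw [h1, Int.floor_intCast]
  simp

/-- Under (C1), (C2): if `M = max g > g(n + 1/2)` and `k - 1/2 = max g⁻¹(M)`, then
`k ≤ n`, `σ_{k+1} = (-1,-1)` (resp. `σ_{n+1} = -1` if `k = n`), `g(k + 1/2) = M - 1`,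
and `g(x) ≤ M - 1` for `k + 1/2 ≤ x ≤ n + 1/2`. -/
theorem pl_after_last_max (n : ℕ) (σ : Fin n → ℤ × ℤ) (σlast : ℤ)
    (hσ : ∀ j : Fin n, ((σ j).1 = 1 ∨ (σ j).1 = -1) ∧ ((σ j).2 = 1 ∨ (σ j).2 = -1))
    (hlast : σlast = 1 ∨ σlast = -1)
    (hC1 : (sigFull n σ σlast 0).1 = 1)
    (hC2 : ∀ j < n, (sigFull n σ σlast j).2 = 1 → (sigFull n σ σlast (j + 1)).1 = 1)
    (M : ℝ)
    (hM : IsGreatest (plFun n σ σlast '' Set.Icc 0 ((n : ℝ) + 1/2)) M)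
    (hMend : plFun n σ σlast ((n : ℝ) + 1/2) < M)
    (k : ℕ)
    (hk : IsGreatest {x : ℝ | x ∈ Set.Icc (0 : ℝ) ((n : ℝ) + 1/2) ∧ plFun n σ σlast x = M}
      ((k : ℝ) - 1/2)) :
    k ≤ n ∧ (k < n → sigFull n σ σlast k = (-1, -1)) ∧ (k = n → σlast = -1) ∧
      plFun n σ σlast ((k : ℝ) + 1/2) = M - 1 ∧
      ∀ x ∈ Set.Icc ((k : ℝ) + 1/2) ((n : ℝ) + 1/2), plFun n σ σlast x ≤ M - 1 := by
  set V := plVal n σ σlast with hV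
  set S := plSlope n σ σlast with hSdef
  -- k ≥ 1
  obtain ⟨k', rfl⟩ : ∃ k', k = k' + 1 := by
    rcases k with _ | k'
    · exfalso; have h := hk.1.1.1; norm_num at h
    · exact ⟨k', rfl⟩
  have hstep : ∀ t, V (t+1) = V t + (S t : ℝ)/2 := fun t => rfl
  have hSpm : ∀ t, S t = 1 ∨ S t = -1 := by
    intro t
    rw [hSdef]; unfold plSlope sigFull
    split
    · split
      · exact (hσ _).1
      · exact hlast
    · split
      · exact (hσ _).2
      · exact hlast
  have hSe : ∀ j, S (2*j) = (sigFull n σ σlast j).1 := by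
    intro j; rw [hSdef]; unfold plSlope
    rw [if_pos (by omega : 2*j % 2 = 0), show (2*j)/2 = j from by omega]
  have hSo : ∀ j, S (2*j+1) = (sigFull n σ σlast j).2 := by
    intro j; rw [hSdef]; unfold plSlope
    rw [if_neg (by omega : ¬ (2*j+1) % 2 = 0), show (2*j+1)/2 = j from by omega]
  -- value of g at the last max point
  have hVk' : V (2*k'+1) = M := by
    have h := hk.1.2
    rw [show ((k'+1:ℕ):ℝ) - 1/2 = ((2*k'+1:ℕ):ℝ)/2 by push_cast; ring, plFun_grid] at h
    exact h
  -- k ≤ n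
  have hkn : k' + 1 ≤ n := by
    by_contra h
    have h1 : ((k'+1:ℕ):ℝ) - 1/2 ≤ (n:ℝ) + 1/2 := hk.1.1.2
    have h2 : (k':ℝ) ≤ (n:ℝ) := by push_cast at h1; linarith
    have h3 : k' = n := by
      have : k' ≤ n := by exact_mod_cast h2
      omega
    subst h3
    have h4 := hk.1.2
    rw [show ((k'+1:ℕ):ℝ) - 1/2 = (k':ℝ) + 1/2 by push_cast; ring] at h4
    linarith [hMend]
  -- all grid values ≤ M
  have hDom : ∀ t, t ≤ 2*n+1 → V t ≤ M := by
    intro t ht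
    have hmem : ((t:ℝ)/2) ∈ Set.Icc (0:ℝ) ((n:ℝ)+1/2) := by
      constructor
      · positivity
      · have : (t:ℝ) ≤ 2*(n:ℝ)+1 := by exact_mod_cast ht
        linarith
    exact hM.2 ⟨(t:ℝ)/2, hmem, plFun_grid n σ σlast t⟩
  -- no grid value after the last max equals M
  have hNotM : ∀ t, 2*k'+1 < t → t ≤ 2*n+1 → V t ≠ M := by
    intro t h1 h2 hEq
    rcases eq_or_lt_of_le h2 with h3 | h3
    · have hg := plFun_grid n σ σlast t
      rw [h3] at hg hEq
      rw [show ((2*n+1:ℕ):ℝ)/2 = (n:ℝ) + 1/2 by push_cast; ring] at hg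
      rw [hg] at hMend
      linarith [hEq, hMend]
    · have hle : (t:ℝ)/2 ≤ ((k'+1:ℕ):ℝ) - 1/2 := by
        apply hk.2
        refine ⟨⟨by positivity, ?_⟩, ?_⟩
        · have : (t:ℝ) ≤ 2*(n:ℝ)+1 := by exact_mod_cast h2
          linarith
        · rw [plFun_grid]; exact hEq
      have : (t:ℝ) ≤ 2*(k':ℝ)+1 := by push_cast at hle; linarith
      have : t ≤ 2*k'+1 := by exact_mod_cast this
      omega
  -- half-integer lattice with parity
  have hlat : ∀ t : ℕ, ∃ m : ℤ, V t = (m:ℝ)/2 ∧ (m + t) % 2 = 1 := by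
    intro t
    induction t with
    | zero => exact ⟨-1, by rw [hV]; norm_num [plVal], by decide⟩
    | succ t ih =>
      obtain ⟨m, hm, hp⟩ := ih
      refine ⟨m + S t, ?_, ?_⟩
      · rw [hstep t, hm]; push_cast; ring
      · rcases hSpm t with h | h <;> rw [h] <;> push_cast <;> omega
  have hdiff : ∀ t : ℕ, t % 2 = 1 → ∃ m : ℤ, V t = M + m := by
    intro t ht
    obtain ⟨m1, h1, p1⟩ := hlat t
    obtain ⟨m2, h2, p2⟩ := hlat (2*k'+1)
    obtain ⟨c, hc⟩ : ∃ c, m1 = m2 + 2*c := ⟨(m1-m2)/2, by omega⟩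
    refine ⟨c, ?_⟩
    rw [h1, ← hVk', h2, hc]; push_cast; ring
  -- odd grid values after the last max are ≤ M - 1
  have hBelow : ∀ t, t % 2 = 1 → 2*k'+1 < t → t ≤ 2*n+1 → V t ≤ M - 1 := by
    intro t hodd h1 h2
    obtain ⟨m, hm⟩ := hdiff t hodd
    have hle : V t ≤ M := hDom t h2
    have hne : V t ≠ M := hNotM t h1 h2
    have hm0 : m ≤ 0 := by
      have : (m:ℝ) ≤ 0 := by linarith [hm]
      exact_mod_cast this
    have hmne : m ≠ 0 := by
      rintro rfl
      exact hne (by rw [hm]; push_cast; ring)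
    have : (m:ℝ) ≤ -1 := by exact_mod_cast (show m ≤ -1 by omega)
    linarith
  -- even grid values strictly after are ≤ M - 3/2
  have hBE : ∀ s, s % 2 = 1 → 2*k'+1 < s → s+1 ≤ 2*n+1 → V (s+1) ≤ M - 3/2 := by
    intro s hodd h1 h2
    have hsle : V s ≤ M - 1 := hBelow s hodd h1 (by omega)
    obtain ⟨m, hm⟩ := hdiff s hodd
    have hm1 : m ≤ -1 := by
      have : (m:ℝ) ≤ -1 := by linarith [hm]
      exact_mod_cast this
    rcases hSpm s with ha | ha
    · rcases (by omega : m ≤ -2 ∨ m = -1) with h | h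
      · rw [hstep s, hm, ha]
        have : (m:ℝ) ≤ -2 := by exact_mod_cast h
        push_cast
        linarith
      · exfalso
        subst h
        have hs2 : s / 2 < n := by omega
        obtain ⟨j, rfl⟩ : ∃ j, s = 2*j+1 := ⟨s/2, by omega⟩
        have hc2 := hC2 j (by omega) (by rw [← hSo j]; exact ha)
        have hs3 : S (2*j+1+1) = (sigFull n σ σlast (j+1)).1 := by
          rw [show 2*j+1+1 = 2*(j+1) from by ring, hSe]
        have hV2 : V (2*j+1+2) = M := by
          rw [show 2*j+1+2 = (2*j+1+1)+1 from rfl, hstep, hstep, hm, ha, hs3, hc2]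
          push_cast; ring
        have hb := hBelow (2*j+1+2) (by omega) (by omega) (by omega)
        rw [hV2] at hb; linarith
    · rw [hstep s, hm, ha]
      have : (m:ℝ) ≤ -1 := by exact_mod_cast hm1
      push_cast
      linarith
  -- determine the slopes right after the max
  have hb3 := hBelow (2*k'+3) (by omega) (by omega) (by omega)
  have e2 : V (2*k'+2) = M + (S (2*k'+1) : ℝ)/2 := by
    rw [show 2*k'+2 = (2*k'+1)+1 from rfl, hstep, hVk']
  have e3 : V (2*k'+3) = M + (S (2*k'+1) : ℝ)/2 + (S (2*k'+2) : ℝ)/2 := by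
    rw [show 2*k'+3 = (2*k'+2)+1 from rfl, hstep, e2]
  have keyZ : S (2*k'+1) + S (2*k'+2) ≤ -2 := by
    have : (S (2*k'+1) : ℝ) + (S (2*k'+2) : ℝ) ≤ -2 := by
      rw [e3] at hb3; linarith
    exact_mod_cast this
  have hab : S (2*k'+1) = -1 ∧ S (2*k'+2) = -1 := by
    rcases hSpm (2*k'+1) with h|h <;> rcases hSpm (2*k'+2) with h'|h' <;> omega
  have hVmid : V (2*k'+3) = M - 1 := by
    rw [e3, hab.1, hab.2]; push_cast; ring
  refine ⟨hkn, ?_, ?_, ?_, ?_⟩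
  · -- k < n → sigFull k = (-1,-1)
    intro hlt
    have hbe := hBE (2*k'+3) (by omega) (by omega) (by omega)
    have e4 : V (2*k'+4) = M - 1 + (S (2*k'+3) : ℝ)/2 := by
      rw [show 2*k'+4 = (2*k'+3)+1 from rfl, hstep, hVmid]
    have hc : S (2*k'+3) = -1 := by
      rcases hSpm (2*k'+3) with h|h
      · exfalso; rw [h] at e4; push_cast at e4; linarith
      · exact h
    have h1 : (sigFull n σ σlast (k'+1)).1 = -1 := by
      rw [← hSe (k'+1), show 2*(k'+1) = 2*k'+2 from by ring]; exact hab.2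
    have h2 : (sigFull n σ σlast (k'+1)).2 = -1 := by
      rw [← hSo (k'+1), show 2*(k'+1)+1 = 2*k'+3 from by ring]; exact hc
    exact Prod.ext h1 h2
  · -- k = n → σlast = -1
    intro he
    have hsf : sigFull n σ σlast n = (σlast, σlast) := by
      unfold sigFull; rw [dif_neg (lt_irrefl n)]
    have h1 : (sigFull n σ σlast (k'+1)).1 = -1 := by
      rw [← hSe (k'+1), show 2*(k'+1) = 2*k'+2 from by ring]; exact hab.2
    rw [he, hsf] at h1
    exact h1
  · -- g(k+1/2) = M - 1
    rw [show ((k'+1:ℕ):ℝ) + 1/2 = ((2*k'+3:ℕ):ℝ)/2 by push_cast; ring, plFun_grid]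
    exact hVmid
  · -- g(x) ≤ M-1 on [k+1/2, n+1/2]
    intro x hx
    obtain ⟨hx1, hx2⟩ := hx
    have hx1' : 2*(k':ℝ) + 3 ≤ 2*x := by push_cast at hx1; linarith
    have hx2' : 2*x ≤ 2*(n:ℝ) + 1 := by linarith
    have hfeq : plFun n σ σlast x = V ((⌊2*x⌋).toNat) +
        (x - (((⌊2*x⌋).toNat : ℕ):ℝ)/2) * (S ((⌊2*x⌋).toNat) : ℝ) := rfl
    obtain ⟨t, ht⟩ : ∃ t : ℕ, t = (⌊2*x⌋).toNat := ⟨_, rfl⟩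
    rw [← ht] at hfeq
    have h0 : (0:ℤ) ≤ ⌊2*x⌋ := Int.floor_nonneg.2 (by linarith)
    have htz : ((t:ℕ):ℤ) = ⌊2*x⌋ := by rw [ht]; exact Int.toNat_of_nonneg h0
    have htR : (t:ℝ) ≤ 2*x := by
      have h := Int.floor_le (2*x)
      rw [← htz] at h; exact_mod_cast h
    have htR2 : 2*x < (t:ℝ)+1 := by
      have h := Int.lt_floor_add_one (2*x)
      rw [← htz] at h; exact_mod_cast h
    have hlow : 2*k'+3 ≤ t := by
      have h : (2*k'+3 : ℤ) ≤ ⌊2*x⌋ := Int.le_floor.2 (by push_cast; linarith)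
      omega
    have hhigh : t ≤ 2*n+1 := by
      have h : (⌊2*x⌋:ℝ) < 2*(n:ℝ)+2 := lt_of_le_of_lt (Int.floor_le _) (by linarith)
      have h' : ⌊2*x⌋ < 2*(n:ℤ)+2 := by exact_mod_cast h
      omega
    have hfr1 : 0 ≤ x - (t:ℝ)/2 := by linarith
    have hfr2 : x - (t:ℝ)/2 ≤ 1/2 := by linarith
    rcases (by omega : t % 2 = 1 ∨ t % 2 = 0) with hp | hp
    · have hVt := hBelow t hp (by omega) hhigh
      rcases hSpm t with hs | hs
      · by_cases hteq : t = 2*n+1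
        · have hxeq : x = (t:ℝ)/2 := by
            have ht' : (t:ℝ) = 2*(n:ℝ)+1 := by rw [hteq]; push_cast; ring
            linarith
          rw [hfeq, hxeq]
          simp only [sub_self, zero_mul, add_zero]
          exact hVt
        · have hb := hBE t hp (by omega) (by omega)
          have h1 : V (t+1) = V t + (S t : ℝ)/2 := hstep t
          rw [hs] at h1
          rw [hfeq, hs]
          push_cast
          linarith
      · rw [hfeq, hs]
        push_cast at hfr1 ⊢
        nlinarith [hVt, hfr1]
    · obtain ⟨s, rfl⟩ : ∃ s, t = s + 1 := ⟨t-1, by omega⟩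
      have hb := hBE s (by omega) (by omega) (by omega)
      rcases hSpm (s+1) with hs | hs
      · rw [hfeq, hs]
        push_cast at hfr2 ⊢
        linarith
      · rw [hfeq, hs]
        push_cast at hfr1 ⊢
        linarith
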